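/- arXiv:0806.1339 — 9 statements merged into one kernel-verified Lean document; each statement's English description precedes it below -/
import Mathlib

section
/- For all complex numbers ζ, η, ξ such that 1 − conj(η)·ξ ≠ 0, 1 − conj(ζ)·η ≠ 0, 1 − conj(ζ)·(η·ξ) ≠ 0 and 1 − conj(ζ·η)·(((1 − ζ·conj(η))/(1 − η·conj(ζ)))·ξ) ≠ 0, one has ζ·(η·ξ) = (ζ·η)·( ((1 − ζ·conj(η))/(1 − η·conj(ζ)))·ξ ). That is, the left associator l_{(ζ,η)} = L_{ζ·η}^{-1} ∘ L_ζ ∘ L_η of the loop QℂC is multiplication by the unimodular factor (1 − ζ·conj(η))/(1 − η·conj(ζ)). -/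
open Complex

/-- The loop QℂC: ℂ with the partial operation ζ·η = (ζ+η)/(1 - conj ζ · η). -/
noncomputable def qcMul (ζ η : ℂ) : ℂ := (ζ + η) / (1 - (starRingEnd ℂ) ζ * η)

/-- the left associator of QℂC is multiplication by
    (1 − ζ·conj η)/(1 − η·conj ζ):
    ζ·(η·ξ) = (ζ·η)·( ((1 − ζ·conj η)/(1 − η·conj ζ))·ξ ). -/
theorem qc_left_associator (ζ η ξ : ℂ)
    (h1 : 1 - (starRingEnd ℂ) η * ξ ≠ 0)
    (h2 : 1 - (starRingEnd ℂ) ζ * η ≠ 0)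
    (h3 : 1 - (starRingEnd ℂ) ζ * qcMul η ξ ≠ 0)
    (h4 : 1 - (starRingEnd ℂ) (qcMul ζ η) *
        ((1 - ζ * (starRingEnd ℂ) η) / (1 - η * (starRingEnd ℂ) ζ) * ξ) ≠ 0) :
    qcMul ζ (qcMul η ξ) =
      qcMul (qcMul ζ η) ((1 - ζ * (starRingEnd ℂ) η) / (1 - η * (starRingEnd ℂ) ζ) * ξ) := by
  have h2' : 1 - ζ * (starRingEnd ℂ) η ≠ 0 := by
    intro h
    apply h2
    have := congrArg (starRingEnd ℂ) h
    simpa [map_sub, map_mul, mul_comm] using this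
  have h2'' : 1 - η * (starRingEnd ℂ) ζ ≠ 0 := by
    rwa [mul_comm]
  unfold qcMul at *
  rw [div_eq_div_iff h3 h4]
  simp only [map_div₀, map_sub, map_mul, map_one, map_add, Complex.conj_conj] at *
  field_simp at *
  field_simp
  ring_nf
end

section
/- Let f : ℂ → ℂ be twice continuously differentiable as a map of real vector spaces, and define the vector fields Γ₁ and Γ₂ of the loop QℂC acting on f by (Γ₁ f)(η) = (1 + |η|²)·∂f(η) and (Γ₂ f)(η) = (1 + |η|²)·∂̄f(η). Then for every η ∈ ℂ, (Γ₁(Γ₂ f))(η) − (Γ₂(Γ₁ f))(η) = conj(η)·(Γ₂ f)(η) − η·(Γ₁ f)(η); i.e. the commutator satisfies [Γ₁, Γ₂] = conj(η)·Γ₂ − η·Γ₁, so the structure functions of the quasialgebra of QℂC are C¹₁₂ = −η and C²₁₂ = conj(η). -/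
open Complex

/-- Wirtinger derivative ∂f(η) = (1/2)(Df(η)(1) − i·Df(η)(i)) of a real-differentiable
    map f : ℂ → ℂ. -/
noncomputable def wirtD (f : ℂ → ℂ) (η : ℂ) : ℂ :=
  (1 / 2) * (fderiv ℝ f η 1 - Complex.I * fderiv ℝ f η Complex.I)

/-- Conjugate Wirtinger derivative ∂̄f(η) = (1/2)(Df(η)(1) + i·Df(η)(i)). -/
noncomputable def wirtDbar (f : ℂ → ℂ) (η : ℂ) : ℂ :=
  (1 / 2) * (fderiv ℝ f η 1 + Complex.I * fderiv ℝ f η Complex.I)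

-- second-derivative apply lemma
lemma fderiv_apply_snd (f : ℂ → ℂ) (hf : ContDiff ℝ 2 f) (η v w : ℂ) :
    fderiv ℝ (fun y => fderiv ℝ f y v) η w = fderiv ℝ (fderiv ℝ f) η w v := by
  have hd : DifferentiableAt ℝ (fderiv ℝ f) η :=
    ((hf.fderiv_right (m := 1) (by norm_num)).differentiable one_ne_zero).differentiableAt
  rw [fderiv_clm_apply hd (differentiableAt_const v)]
  simp

lemma diff_fderiv_apply (f : ℂ → ℂ) (hf : ContDiff ℝ 2 f) (η v : ℂ) :
    DifferentiableAt ℝ (fun y => fderiv ℝ f y v) η := by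
  have hd : DifferentiableAt ℝ (fderiv ℝ f) η :=
    ((hf.fderiv_right (m := 1) (by norm_num)).differentiable one_ne_zero).differentiableAt
  exact hd.clm_apply (differentiableAt_const v)

lemma diff_wirtD (f : ℂ → ℂ) (hf : ContDiff ℝ 2 f) (η : ℂ) :
    DifferentiableAt ℝ (wirtD f) η := by
  unfold wirtD
  exact ((diff_fderiv_apply f hf η 1).sub
    ((differentiableAt_const _).mul (diff_fderiv_apply f hf η I))).const_mul _

lemma diff_wirtDbar (f : ℂ → ℂ) (hf : ContDiff ℝ 2 f) (η : ℂ) :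
    DifferentiableAt ℝ (wirtDbar f) η := by
  unfold wirtDbar
  exact ((diff_fderiv_apply f hf η 1).add
    ((differentiableAt_const _).mul (diff_fderiv_apply f hf η I))).const_mul _

lemma fderiv_wirtDbar (f : ℂ → ℂ) (hf : ContDiff ℝ 2 f) (η w : ℂ) :
    fderiv ℝ (wirtDbar f) η w =
      (1/2) * (fderiv ℝ (fderiv ℝ f) η w 1 + I * fderiv ℝ (fderiv ℝ f) η w I) := by
  have h1 := diff_fderiv_apply f hf η 1
  have hI := diff_fderiv_apply f hf η I
  have : wirtDbar f = fun y => (1/2) * ((fun y => fderiv ℝ f y 1) y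
      + I * (fun y => fderiv ℝ f y I) y) := rfl
  rw [this, fderiv_const_mul (h1.fun_add ((differentiableAt_const _).fun_mul hI)),
    fderiv_fun_add h1 ((differentiableAt_const _).fun_mul hI),
    fderiv_const_mul hI]
  simp [fderiv_apply_snd f hf η]
  ring

lemma fderiv_wirtD (f : ℂ → ℂ) (hf : ContDiff ℝ 2 f) (η w : ℂ) :
    fderiv ℝ (wirtD f) η w =
      (1/2) * (fderiv ℝ (fderiv ℝ f) η w 1 - I * fderiv ℝ (fderiv ℝ f) η w I) := by
  have h1 := diff_fderiv_apply f hf η 1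
  have hI := diff_fderiv_apply f hf η I
  have : wirtD f = fun y => (1/2) * ((fun y => fderiv ℝ f y 1) y
      - I * (fun y => fderiv ℝ f y I) y) := rfl
  rw [this, fderiv_const_mul (h1.fun_sub ((differentiableAt_const _).fun_mul hI)),
    fderiv_fun_sub h1 ((differentiableAt_const _).fun_mul hI),
    fderiv_const_mul hI]
  simp [fderiv_apply_snd f hf η]

lemma mixed_comm (f : ℂ → ℂ) (hf : ContDiff ℝ 2 f) (η : ℂ) :
    wirtD (wirtDbar f) η = wirtDbar (wirtD f) η := by
  have hsymm := hf.contDiffAt.isSymmSndFDerivAt (x := η) (by norm_num)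
  have h := hsymm 1 I
  simp only [wirtD, wirtDbar, fderiv_wirtDbar f hf, fderiv_wirtD f hf]
  rw [show fderiv ℝ (fderiv ℝ f) η 1 I = fderiv ℝ (fderiv ℝ f) η I 1 from h]
  ring

lemma wirtD_mul (g h : ℂ → ℂ) (η : ℂ) (hg : DifferentiableAt ℝ g η)
    (hh : DifferentiableAt ℝ h η) :
    wirtD (fun y => g y * h y) η = wirtD g η * h η + g η * wirtD h η := by
  unfold wirtD
  rw [fderiv_fun_mul hg hh]
  simp [smul_eq_mul]
  ring

lemma wirtDbar_mul (g h : ℂ → ℂ) (η : ℂ) (hg : DifferentiableAt ℝ g η)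
    (hh : DifferentiableAt ℝ h η) :
    wirtDbar (fun y => g y * h y) η = wirtDbar g η * h η + g η * wirtDbar h η := by
  unfold wirtDbar
  rw [fderiv_fun_mul hg hh]
  simp [smul_eq_mul]
  ring

lemma hasFDerivAt_u (η : ℂ) :
    HasFDerivAt (fun y : ℂ => 1 + (Complex.normSq y : ℂ))
      (η • (Complex.conjCLE.toContinuousLinearMap.restrictScalars ℝ)
        + (starRingEnd ℂ η) • (ContinuousLinearMap.id ℝ ℂ)) η := by
  have hc : HasFDerivAt (starRingEnd ℂ)
      (Complex.conjCLE.toContinuousLinearMap.restrictScalars ℝ) η := by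
    exact Complex.conjCLE.hasFDerivAt
  have hm := (hasFDerivAt_id η).mul hc
  have := hm.const_add (1 : ℂ)
  convert this using 2 with y
  all_goals first | rfl | simp [Complex.mul_conj]

lemma fderiv_u (η v : ℂ) :
    fderiv ℝ (fun y : ℂ => 1 + (Complex.normSq y : ℂ)) η v =
      starRingEnd ℂ η * v + η * starRingEnd ℂ v := by
  rw [(hasFDerivAt_u η).fderiv]
  simp [smul_eq_mul]
  ring

lemma diff_u (η : ℂ) : DifferentiableAt ℝ (fun y : ℂ => 1 + (Complex.normSq y : ℂ)) η :=
  (hasFDerivAt_u η).differentiableAt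

lemma wirtD_u (η : ℂ) :
    wirtD (fun y : ℂ => 1 + (Complex.normSq y : ℂ)) η = starRingEnd ℂ η := by
  unfold wirtD
  rw [fderiv_u, fderiv_u]
  simp [Complex.conj_I]
  ring_nf
  rw [Complex.I_sq]
  ring

lemma wirtDbar_u (η : ℂ) :
    wirtDbar (fun y : ℂ => 1 + (Complex.normSq y : ℂ)) η = η := by
  unfold wirtDbar
  rw [fderiv_u, fderiv_u]
  simp [Complex.conj_I]
  ring_nf
  rw [Complex.I_sq]
  ring

/-- The vector field Γ₁ = (1 + |η|²)∂_η of the loop QℂC. -/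
noncomputable def Gamma1 (f : ℂ → ℂ) (η : ℂ) : ℂ :=
  (1 + (Complex.normSq η : ℂ)) * wirtD f η

/-- The vector field Γ₂ = (1 + |η|²)∂_{conj η} of the loop QℂC. -/
noncomputable def Gamma2 (f : ℂ → ℂ) (η : ℂ) : ℂ :=
  (1 + (Complex.normSq η : ℂ)) * wirtDbar f η

/-- the commutator of the left quasi-invariant vector fields of QℂC is
    [Γ₁, Γ₂] = conj(η)·Γ₂ − η·Γ₁, i.e. the structure functions are
    C¹₁₂ = −η and C²₁₂ = conj η. -/
theorem qc_commutator (f : ℂ → ℂ) (hf : ContDiff ℝ 2 f) (η : ℂ) :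
    Gamma1 (Gamma2 f) η - Gamma2 (Gamma1 f) η =
      (starRingEnd ℂ) η * Gamma2 f η - η * Gamma1 f η := by
  have h2 : Gamma2 f = fun y => (1 + (Complex.normSq y : ℂ)) * wirtDbar f y := rfl
  have h1 : Gamma1 f = fun y => (1 + (Complex.normSq y : ℂ)) * wirtD f y := rfl
  have e1 : wirtD (Gamma2 f) η =
      starRingEnd ℂ η * wirtDbar f η
        + (1 + (Complex.normSq η : ℂ)) * wirtD (wirtDbar f) η := by
    rw [h2, wirtD_mul _ _ η (diff_u η) (diff_wirtDbar f hf η), wirtD_u]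
  have e2 : wirtDbar (Gamma1 f) η =
      η * wirtD f η
        + (1 + (Complex.normSq η : ℂ)) * wirtDbar (wirtD f) η := by
    rw [h1, wirtDbar_mul _ _ η (diff_u η) (diff_wirtD f hf η), wirtDbar_u]
  simp only [Gamma1, Gamma2, e1, e2, mixed_comm f hf η]
  ring
end

section
/- For all η, ζ ∈ ℂ with w := 1 − conj(η)·ζ ≠ 0, the 2×2 complex matrices satisfy U_η · U_ζ · Λ(η,ζ) = U_{η∗ζ}, where η∗ζ := (η + ζ)/w and Λ(η,ζ) := diag(λ, conj(λ)) with the unimodular number λ := w/|w| (so that λ = e^{iφ} with φ = arg(1 − conj(η)·ζ)). That is, the QSU(2) multiplication U_η ∗ U_ζ := U_η U_ζ Λ(η,ζ) reproduces on the parameters the multiplication of the loop QℂC, giving a nonassociative matrix representation of QS². -/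
set_option maxHeartbeats 1000000


open Complex Matrix

/-- The matrix U_η = (1/√(1+|η|²))·[[1, η], [−conj η, 1]] of the loop QSU(2). -/
noncomputable def Umat (η : ℂ) : Matrix (Fin 2) (Fin 2) ℂ :=
  ((Real.sqrt (1 + Complex.normSq η) : ℂ))⁻¹ • !![1, η; -((starRingEnd ℂ) η), 1]

/-- The compensating diagonal matrix Λ(η,ζ) = diag(λ, conj λ) with λ = w/|w|,
    w = 1 − conj(η)·ζ. -/
noncomputable def LambdaMat (η ζ : ℂ) : Matrix (Fin 2) (Fin 2) ℂ :=
  let w := 1 - (starRingEnd ℂ) η * ζ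
  !![w / (‖w‖ : ℂ), 0; 0, (starRingEnd ℂ) (w / (‖w‖ : ℂ))]

/-- the QSU(2) multiplication U_η ∗ U_ζ := U_η U_ζ Λ(η,ζ) reproduces on
    parameters the QℂC multiplication: U_η · U_ζ · Λ(η,ζ) = U_{η∗ζ}
    with η∗ζ = (η + ζ)/(1 − conj(η)·ζ). -/
theorem qsu2_representation (η ζ : ℂ) (hw : 1 - (starRingEnd ℂ) η * ζ ≠ 0) :
    Umat η * Umat ζ * LambdaMat η ζ = Umat ((η + ζ) / (1 - (starRingEnd ℂ) η * ζ)) := by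
  have hr : ‖(1 - (starRingEnd ℂ) η * ζ)‖ ≠ 0 := norm_ne_zero_iff.mpr hw
  have hrC : ((‖(1 - (starRingEnd ℂ) η * ζ)‖ : ℝ) : ℂ) ≠ 0 := by
    exact_mod_cast hr
  have hA : (0:ℝ) < 1 + Complex.normSq η := by
    have := Complex.normSq_nonneg η; linarith
  have hB : (0:ℝ) < 1 + Complex.normSq ζ := by
    have := Complex.normSq_nonneg ζ; linarith
  have hsA : Real.sqrt (1 + Complex.normSq η) ≠ 0 := (Real.sqrt_pos.mpr hA).ne'
  have hsB : Real.sqrt (1 + Complex.normSq ζ) ≠ 0 := (Real.sqrt_pos.mpr hB).ne'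
  have hsAC : ((Real.sqrt (1 + Complex.normSq η) : ℝ) : ℂ) ≠ 0 := by exact_mod_cast hsA
  have hsBC : ((Real.sqrt (1 + Complex.normSq ζ) : ℝ) : ℂ) ≠ 0 := by exact_mod_cast hsB
  have hkey : 1 + Complex.normSq ((η + ζ) / (1 - (starRingEnd ℂ) η * ζ))
      = (1 + Complex.normSq η) * (1 + Complex.normSq ζ)
        / Complex.normSq (1 - (starRingEnd ℂ) η * ζ) := by
    rw [map_div₀]
    have h : Complex.normSq (1 - (starRingEnd ℂ) η * ζ) ≠ 0 := fun h => hw (Complex.normSq_eq_zero.mp h)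
    field_simp
    simp only [Complex.normSq_sub, Complex.normSq_add, Complex.normSq_mul,
      Complex.normSq_one, Complex.normSq_conj]
    have hd := h
    simp only [Complex.normSq_sub, Complex.normSq_add, Complex.normSq_mul,
      Complex.normSq_one, Complex.normSq_conj] at hd
    rw [one_add_div]
    · congr 1
      simp [Complex.mul_re, Complex.mul_im, Complex.normSq_apply]
      ring
    · rw [mul_comm ζ, mul_comm (Complex.normSq ζ)]
      exact hd
  have hsqrt : Real.sqrt (1 + Complex.normSq ((η + ζ) / (1 - (starRingEnd ℂ) η * ζ)))
      = Real.sqrt (1 + Complex.normSq η) * Real.sqrt (1 + Complex.normSq ζ)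
        / ‖(1 - (starRingEnd ℂ) η * ζ)‖ := by
    rw [hkey, Real.sqrt_div' _ (Complex.normSq_nonneg _), Real.sqrt_mul hA.le,
      Complex.norm_def]
  have hconjw : (1 - η * (starRingEnd ℂ) ζ) * (1 - (starRingEnd ℂ) η * ζ)
      = ((‖(1 - (starRingEnd ℂ) η * ζ)‖ : ℝ) : ℂ) ^ 2 := by
    have : (1 : ℂ) - η * (starRingEnd ℂ) ζ = (starRingEnd ℂ) (1 - (starRingEnd ℂ) η * ζ) := by
      simp [map_sub, _root_.map_mul]
    rw [this, mul_comm, Complex.mul_conj]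
    norm_cast
    rw [Complex.sq_norm]
  rw [Umat, Umat, Umat, LambdaMat, hsqrt]
  simp only [Matrix.smul_mul, Matrix.mul_smul, Matrix.mul_fin_two]
  have hcw : (starRingEnd ℂ) (1 - (starRingEnd ℂ) η * ζ) ≠ 0 := by
    simpa using star_ne_zero.mpr hw
  have hcw' : (1 : ℂ) - η * (starRingEnd ℂ) ζ ≠ 0 := by
    simpa [map_sub, _root_.map_mul] using hcw
  ext i j
  fin_cases i <;> fin_cases j
  · simp only [Matrix.smul_apply, Matrix.cons_val', Matrix.cons_val_zero, Matrix.cons_val_one,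
        Matrix.head_cons, Matrix.head_fin_const, Matrix.empty_val', Matrix.cons_val_fin_one,
        smul_eq_mul, map_div₀, map_sub, _root_.map_mul, _root_.map_one,
        Complex.conj_conj, Complex.norm_conj, Matrix.of_apply, Complex.conj_ofReal]
    push_cast
    field_simp
    linear_combination hconjw
  · simp only [Matrix.smul_apply, Matrix.cons_val', Matrix.cons_val_zero, Matrix.cons_val_one,
        Matrix.head_cons, Matrix.head_fin_const, Matrix.empty_val', Matrix.cons_val_fin_one,
        smul_eq_mul, map_div₀, map_sub, _root_.map_mul, _root_.map_one,
        Complex.conj_conj, Complex.norm_conj, Matrix.of_apply, Complex.conj_ofReal]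
    push_cast
    field_simp
    rw [mul_comm ζ ((starRingEnd ℂ) η), mul_zero, zero_add, div_eq_div_iff hrC hw]
    linear_combination (η + ζ) * hconjw
  · simp only [Matrix.smul_apply, Matrix.cons_val', Matrix.cons_val_zero, Matrix.cons_val_one,
        Matrix.head_cons, Matrix.head_fin_const, Matrix.empty_val', Matrix.cons_val_fin_one,
        smul_eq_mul, map_div₀, map_sub, _root_.map_mul, _root_.map_one,
        Complex.conj_conj, Complex.norm_conj, Matrix.of_apply, Complex.conj_ofReal]
    push_cast
    field_simp
    rw [mul_comm ((starRingEnd ℂ) ζ) η, map_add, ← neg_div, eq_div_iff hcw']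
    linear_combination (-((starRingEnd ℂ) η + (starRingEnd ℂ) ζ)) * hconjw
  · simp only [Matrix.smul_apply, Matrix.cons_val', Matrix.cons_val_zero, Matrix.cons_val_one,
        Matrix.head_cons, Matrix.head_fin_const, Matrix.empty_val', Matrix.cons_val_fin_one,
        smul_eq_mul, map_div₀, map_sub, _root_.map_mul, _root_.map_one,
        Complex.conj_conj, Complex.norm_conj, Matrix.of_apply, Complex.conj_ofReal]
    push_cast
    field_simp
    linear_combination hconjw
end

section
/- The open unit disk D = {ζ ∈ ℂ : |ζ| < 1} with the operation ζ∗η = (ζ + η)/(1 + conj(ζ)·η) is a two-sided loop with neutral element 0: (i) 0∗ζ = ζ∗0 = ζ for all ζ ∈ D; (ii) for all ζ, b ∈ D there exists a unique x ∈ D with ζ∗x = b; and (iii) for all ζ, b ∈ D there exists a unique y ∈ D with y∗ζ = b. -/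
open Complex

/-- The QH² operation ζ∗η = (ζ + η)/(1 + conj(ζ)·η) on ℂ. -/
noncomputable def qhOp (ζ η : ℂ) : ℂ := (ζ + η) / (1 + (starRingEnd ℂ) ζ * η)

lemma qh_abs_mul_lt_one {x y : ℂ} (hx : ‖x‖ < 1) (hy : ‖y‖ < 1) :
    ‖(x * y)‖ < 1 := by
  rw [norm_mul]
  nlinarith [norm_nonneg x, norm_nonneg y]

lemma qh_one_add_ne {u : ℂ} (h : ‖u‖ < 1) : 1 + u ≠ 0 := by
  intro he
  have : u = -1 := by linear_combination he
  simp [this] at h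

lemma qh_one_sub_ne {u : ℂ} (h : ‖u‖ < 1) : 1 - u ≠ 0 := by
  intro he
  have : u = 1 := by linear_combination -he
  simp [this] at h

lemma qh_key1 (ζ b : ℂ) :
    Complex.normSq (1 - (starRingEnd ℂ) ζ * b) - Complex.normSq (b - ζ) =
      (1 - Complex.normSq ζ) * (1 - Complex.normSq b) := by
  simp only [Complex.normSq_apply, Complex.mul_re, Complex.mul_im, Complex.sub_re,
    Complex.sub_im, Complex.add_re, Complex.add_im, Complex.one_re, Complex.one_im,
    Complex.conj_re, Complex.conj_im]
  ring

lemma qh_key2 (ζ b : ℂ) :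
    Complex.normSq (1 - b * ζ * ((starRingEnd ℂ) b * (starRingEnd ℂ) ζ)) -
      Complex.normSq ((b - ζ) + b * ζ * ((starRingEnd ℂ) b - (starRingEnd ℂ) ζ)) =
      (1 - Complex.normSq b) * (1 - Complex.normSq ζ) *
        Complex.normSq (1 + (starRingEnd ℂ) b * ζ) := by
  simp only [Complex.normSq_apply, Complex.mul_re, Complex.mul_im, Complex.sub_re,
    Complex.sub_im, Complex.add_re, Complex.add_im, Complex.one_re, Complex.one_im,
    Complex.conj_re, Complex.conj_im]
  ring

lemma qh_abs_lt_of_normSq_lt {x y : ℂ} (h : Complex.normSq x < Complex.normSq y) :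
    ‖x‖ < ‖y‖ := by
  rw [Complex.norm_def, Complex.norm_def]
  exact Real.sqrt_lt_sqrt (Complex.normSq_nonneg x) h

/-- the open unit disk D with the operation ∗ is a two-sided loop with
    neutral element 0: (i) 0∗ζ = ζ∗0 = ζ for all ζ ∈ D; (ii) for all ζ, b ∈ D there
    is a unique x ∈ D with ζ∗x = b; (iii) for all ζ, b ∈ D there is a unique y ∈ D
    with y∗ζ = b. -/
theorem qh2_loop :
    (∀ ζ : ℂ, ‖ζ‖ < 1 → qhOp 0 ζ = ζ ∧ qhOp ζ 0 = ζ) ∧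
    (∀ ζ b : ℂ, ‖ζ‖ < 1 → ‖b‖ < 1 →
      ∃! x : ℂ, ‖x‖ < 1 ∧ qhOp ζ x = b) ∧
    (∀ ζ b : ℂ, ‖ζ‖ < 1 → ‖b‖ < 1 →
      ∃! y : ℂ, ‖y‖ < 1 ∧ qhOp y ζ = b) := by
  refine ⟨fun ζ _ => ⟨by simp [qhOp], by simp [qhOp]⟩, ?_, ?_⟩
  · -- left division
    intro ζ b hζ hb
    have hnsζ : Complex.normSq ζ < 1 := by
      have := Complex.sq_norm ζ; nlinarith [norm_nonneg ζ]
    have hnsb : Complex.normSq b < 1 := by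
      have := Complex.sq_norm b; nlinarith [norm_nonneg b]
    have hkey : Complex.normSq (b - ζ) < Complex.normSq (1 - (starRingEnd ℂ) ζ * b) := by
      have := qh_key1 ζ b
      nlinarith [Complex.normSq_nonneg (b - ζ)]
    have hd : (1 : ℂ) - (starRingEnd ℂ) ζ * b ≠ 0 := by
      apply qh_one_sub_ne
      simpa using qh_abs_mul_lt_one hζ hb
    set x₀ : ℂ := (b - ζ) / (1 - (starRingEnd ℂ) ζ * b) with hx₀
    have habs : ‖x₀‖ < 1 := by
      rw [hx₀, norm_div, div_lt_one]
      · exact qh_abs_lt_of_normSq_lt hkey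
      · exact norm_pos_iff.mpr hd
    have hdd : (1 : ℂ) + (starRingEnd ℂ) ζ * x₀ ≠ 0 := by
      apply qh_one_add_ne
      exact qh_abs_mul_lt_one (by simpa using hζ) habs
    refine ⟨x₀, ⟨habs, ?_⟩, ?_⟩
    · rw [qhOp, div_eq_iff hdd, hx₀]
      field_simp [show (1 : ℂ) - b * (starRingEnd ℂ) ζ ≠ 0 by rwa [mul_comm]]
      ring
    · rintro x ⟨hx, hqx⟩
      have hdx : (1 : ℂ) + (starRingEnd ℂ) ζ * x ≠ 0 := by
        apply qh_one_add_ne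
        exact qh_abs_mul_lt_one (by simpa using hζ) hx
      rw [qhOp, div_eq_iff hdx] at hqx
      rw [hx₀, eq_div_iff hd]
      linear_combination hqx
  · -- right division
    intro ζ b hζ hb
    have hnsζ : Complex.normSq ζ < 1 := by
      have := Complex.sq_norm ζ; nlinarith [norm_nonneg ζ]
    have hnsb : Complex.normSq b < 1 := by
      have := Complex.sq_norm b; nlinarith [norm_nonneg b]
    have hbζ : ‖(b * ζ)‖ < 1 := qh_abs_mul_lt_one hb hζ
    set D : ℂ := 1 - b * ζ * ((starRingEnd ℂ) b * (starRingEnd ℂ) ζ) with hD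
    have hDne : D ≠ 0 := by
      rw [hD]
      apply qh_one_sub_ne
      calc ‖(b * ζ * ((starRingEnd ℂ) b * (starRingEnd ℂ) ζ))‖
          = ‖(b * ζ)‖ * ‖(b * ζ)‖ := by
            simp [norm_mul, mul_comm, mul_assoc, mul_left_comm]
        _ < 1 := by nlinarith [norm_nonneg (b * ζ)]
    have hcbζ : (1 : ℂ) + (starRingEnd ℂ) b * ζ ≠ 0 := by
      apply qh_one_add_ne
      exact qh_abs_mul_lt_one (by simpa using hb) hζ
    have hkey : Complex.normSq ((b - ζ) + b * ζ * ((starRingEnd ℂ) b - (starRingEnd ℂ) ζ)) <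
        Complex.normSq D := by
      have h2 := qh_key2 ζ b
      have h3 : 0 < Complex.normSq (1 + (starRingEnd ℂ) b * ζ) :=
        Complex.normSq_pos.mpr hcbζ
      rw [← hD] at h2
      have hp : 0 < (1 - Complex.normSq b) * (1 - Complex.normSq ζ) *
          Complex.normSq (1 + (starRingEnd ℂ) b * ζ) :=
        mul_pos (mul_pos (by linarith) (by linarith)) h3
      linarith
    set y₀ : ℂ := ((b - ζ) + b * ζ * ((starRingEnd ℂ) b - (starRingEnd ℂ) ζ)) / D with hy₀
    have habs : ‖y₀‖ < 1 := by
      rw [hy₀, norm_div, div_lt_one]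
      · exact qh_abs_lt_of_normSq_lt hkey
      · exact norm_pos_iff.mpr hDne
    have hconj : (starRingEnd ℂ) y₀ =
        (((starRingEnd ℂ) b - (starRingEnd ℂ) ζ) +
          (starRingEnd ℂ) b * (starRingEnd ℂ) ζ * (b - ζ)) / D := by
      rw [hy₀, map_div₀]
      congr 1
      · simp only [map_add, map_sub, map_mul, Complex.conj_conj]
        try ring
      · rw [hD]
        simp only [map_sub, map_mul, map_one, Complex.conj_conj]
        ring
    have hden : (1 : ℂ) + (starRingEnd ℂ) y₀ * ζ =
        ((1 - (starRingEnd ℂ) ζ * ζ) * (1 + (starRingEnd ℂ) b * ζ)) / D := by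
      rw [hconj]
      field_simp
      rw [hD]
      ring
    have hζζne : (1 : ℂ) - (starRingEnd ℂ) ζ * ζ ≠ 0 := by
      apply qh_one_sub_ne
      exact qh_abs_mul_lt_one (by simpa using hζ) hζ
    have hdenne : (1 : ℂ) + (starRingEnd ℂ) y₀ * ζ ≠ 0 := by
      rw [hden]
      exact div_ne_zero (mul_ne_zero hζζne hcbζ) hDne
    refine ⟨y₀, ⟨habs, ?_⟩, ?_⟩
    · rw [qhOp, div_eq_iff hdenne, hden, hy₀]
      field_simp
      rw [hD]
      ring
    · rintro y ⟨hy, hqy⟩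
      have hdy : (1 : ℂ) + (starRingEnd ℂ) y * ζ ≠ 0 := by
        apply qh_one_add_ne
        exact qh_abs_mul_lt_one (by simpa using hy) hζ
      rw [qhOp, div_eq_iff hdy] at hqy
      -- y - b*ζ*conj y = b - ζ
      have h1 : y - b * ζ * (starRingEnd ℂ) y = b - ζ := by linear_combination hqy
      have h2 : y₀ - b * ζ * (starRingEnd ℂ) y₀ = b - ζ := by
        rw [hy₀, hconj]
        field_simp
        ring
      have h3 : y - y₀ = b * ζ * (starRingEnd ℂ) (y - y₀) := by
        rw [map_sub]
        linear_combination h1 - h2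
      have h4 : ‖(y - y₀)‖ = ‖(b * ζ)‖ * ‖(y - y₀)‖ := by
        conv_lhs => rw [h3]
        rw [norm_mul, Complex.norm_conj]
      have h5 : ‖(y - y₀)‖ = 0 := by
        nlinarith [norm_nonneg (y - y₀)]
      have := norm_eq_zero.mp h5
      linear_combination this
end

section
/- For all ζ, η, ξ in the open unit disk D, one has ζ∗(η∗ξ) = (ζ∗η)∗( ((1 + ζ·conj(η))/(1 + η·conj(ζ)))·ξ ); i.e. the left associator l_{(ζ,η)} = L_{ζ∗η}^{-1} ∘ L_ζ ∘ L_η of the loop QH² is multiplication by the unimodular factor (1 + ζ·conj(η))/(1 + η·conj(ζ)). -/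
open Complex

lemma one_add_mul_ne_zero {a b : ℂ} (h : ‖a‖ * ‖b‖ < 1) :
    1 + a * b ≠ 0 := by
  intro h0
  have hab : a * b = -1 := by linear_combination h0
  have : ‖a * b‖ = 1 := by rw [hab]; simp
  rw [norm_mul] at this
  linarith

lemma qhOp_abs_lt_one {η ξ : ℂ} (hη : ‖η‖ < 1) (hξ : ‖ξ‖ < 1) :
    ‖qhOp η ξ‖ < 1 := by
  have hηξ : ‖(starRingEnd ℂ) η‖ * ‖ξ‖ < 1 := by
    rw [Complex.norm_conj]
    nlinarith [norm_nonneg η, norm_nonneg ξ]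
  have hd : (1 : ℂ) + (starRingEnd ℂ) η * ξ ≠ 0 := one_add_mul_ne_zero hηξ
  have hdpos : 0 < ‖1 + (starRingEnd ℂ) η * ξ‖ := norm_pos_iff.mpr hd
  rw [qhOp, norm_div, div_lt_one hdpos]
  have hsq : Complex.normSq (1 + (starRingEnd ℂ) η * ξ) - Complex.normSq (η + ξ)
      = (1 - Complex.normSq η) * (1 - Complex.normSq ξ) := by
    simp only [Complex.normSq_apply, Complex.add_re, Complex.add_im, Complex.mul_re,
      Complex.mul_im, Complex.conj_re, Complex.conj_im, Complex.one_re, Complex.one_im]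
    ring
  have h1 : Complex.normSq η < 1 := by
    rw [← Complex.sq_norm]; nlinarith [norm_nonneg η]
  have h2 : Complex.normSq ξ < 1 := by
    rw [← Complex.sq_norm]; nlinarith [norm_nonneg ξ]
  have hlt : Complex.normSq (η + ξ) < Complex.normSq (1 + (starRingEnd ℂ) η * ξ) := by
    nlinarith
  have := Real.sqrt_lt_sqrt (Complex.normSq_nonneg _) hlt
  simpa [Complex.norm_def] using this

/-- for ζ, η, ξ in the open unit disk, the left associator of QH² is
    multiplication by (1 + ζ·conj η)/(1 + η·conj ζ):
    ζ∗(η∗ξ) = (ζ∗η)∗( ((1 + ζ·conj η)/(1 + η·conj ζ))·ξ ). -/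
theorem qh2_left_associator (ζ η ξ : ℂ)
    (hζ : ‖ζ‖ < 1) (hη : ‖η‖ < 1) (hξ : ‖ξ‖ < 1) :
    qhOp ζ (qhOp η ξ) =
      qhOp (qhOp ζ η)
        ((1 + ζ * (starRingEnd ℂ) η) / (1 + η * (starRingEnd ℂ) ζ) * ξ) := by
  have habs : ∀ {a b : ℂ}, ‖a‖ < 1 → ‖b‖ < 1 →
      1 + (starRingEnd ℂ) a * b ≠ 0 := by
    intro a b ha hb
    apply one_add_mul_ne_zero
    rw [Complex.norm_conj]
    nlinarith [norm_nonneg a, norm_nonneg b]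
  have hA : 1 + (starRingEnd ℂ) η * ξ ≠ 0 := habs hη hξ
  have hB : 1 + (starRingEnd ℂ) ζ * η ≠ 0 := habs hζ hη
  have hB' : 1 + η * (starRingEnd ℂ) ζ ≠ 0 := by rwa [mul_comm] at hB
  have hB'' : 1 + ζ * (starRingEnd ℂ) η ≠ 0 := by
    intro h0
    apply hB
    have := congrArg (starRingEnd ℂ) h0
    simpa [mul_comm] using this
  have hq : ‖qhOp η ξ‖ < 1 := qhOp_abs_lt_one hη hξ
  have hq2 : ‖qhOp ζ η‖ < 1 := qhOp_abs_lt_one hζ hη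
  have hC0 : 1 + (starRingEnd ℂ) ζ * qhOp η ξ ≠ 0 := habs hζ hq
  have hS : 1 + (starRingEnd ℂ) ζ * η + (starRingEnd ℂ) η * ξ + (starRingEnd ℂ) ζ * ξ ≠ 0 := by
    have hfac : 1 + (starRingEnd ℂ) ζ * η + (starRingEnd ℂ) η * ξ + (starRingEnd ℂ) ζ * ξ
        = (1 + (starRingEnd ℂ) η * ξ) * (1 + (starRingEnd ℂ) ζ * qhOp η ξ) := by
      rw [qhOp]
      field_simp
      ring
    rw [hfac]
    exact mul_ne_zero hA hC0
  -- the RHS outer denominator is nonzero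
  have hBB : ‖1 + ζ * (starRingEnd ℂ) η‖ = ‖1 + η * (starRingEnd ℂ) ζ‖ := by
    rw [show (1 : ℂ) + ζ * (starRingEnd ℂ) η = (starRingEnd ℂ) (1 + η * (starRingEnd ℂ) ζ) by
      simp [mul_comm], Complex.norm_conj]
  have hBpos : 0 < ‖1 + η * (starRingEnd ℂ) ζ‖ := norm_pos_iff.mpr hB'
  have hD2 : 1 + (starRingEnd ℂ) (qhOp ζ η) *
      ((1 + ζ * (starRingEnd ℂ) η) / (1 + η * (starRingEnd ℂ) ζ) * ξ) ≠ 0 := by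
    apply one_add_mul_ne_zero
    rw [Complex.norm_conj, norm_mul, norm_div, hBB, div_self (ne_of_gt hBpos), one_mul]
    nlinarith [norm_nonneg (qhOp ζ η), norm_nonneg ξ]
  have hL : qhOp ζ (qhOp η ξ) =
      (ζ + η + ξ + ζ * ((starRingEnd ℂ) η * ξ)) /
        (1 + (starRingEnd ℂ) ζ * η + (starRingEnd ℂ) η * ξ + (starRingEnd ℂ) ζ * ξ) := by
    rw [qhOp]
    rw [div_eq_div_iff hC0 hS]
    rw [qhOp]
    have hA' : 1 + ξ * (starRingEnd ℂ) η ≠ 0 := by rwa [mul_comm] at hA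
    field_simp
    ring
  have hR : qhOp (qhOp ζ η) ((1 + ζ * (starRingEnd ℂ) η) / (1 + η * (starRingEnd ℂ) ζ) * ξ) =
      (ζ + η + ξ + ζ * ((starRingEnd ℂ) η * ξ)) /
        (1 + (starRingEnd ℂ) ζ * η + (starRingEnd ℂ) η * ξ + (starRingEnd ℂ) ζ * ξ) := by
    rw [qhOp]
    rw [div_eq_div_iff hD2 hS]
    rw [qhOp]
    simp only [map_div₀, map_add, map_mul, map_one, Complex.conj_conj]
    field_simp
    ring
  rw [hL, hR]
end

section
/- Let θ, ψ ∈ ℝ with cos(θ/2) ≠ 0, cos((θ + π/2)/2) ≠ 0 and tan(θ/2) ≠ 1. Then tan((θ + π/2)/2)·e^{iψ} = (e^{iψ} + tan(θ/2)·e^{iψ}) / (1 − conj(e^{iψ})·(tan(θ/2)·e^{iψ})); i.e. the fiber coordinates ζ₋ = tan(θ/2)e^{iψ} and ζ₊ = tan((θ+π/2)/2)e^{iψ} of the principal QS² bundle S³ over S¹ are related by the left translation ζ₊ = L_{q₊₋} ζ₋ of the loop QℂC with transition function q₊₋ = e^{iψ}. -/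
open Complex

/-- the fiber coordinates ζ₋ = tan(θ/2)e^{iψ} and
    ζ₊ = tan((θ+π/2)/2)e^{iψ} of the principal QS² bundle S³ over S¹ are related by
    the QℂC left translation ζ₊ = L_{q₊₋} ζ₋ with transition function q₊₋ = e^{iψ}:
    tan((θ + π/2)/2)·e^{iψ} = (e^{iψ} + tan(θ/2)·e^{iψ}) / (1 − conj(e^{iψ})·(tan(θ/2)·e^{iψ})). -/
theorem qs2_bundle_transition (θ ψ : ℝ)
    (h1 : Real.cos (θ / 2) ≠ 0)
    (h2 : Real.cos ((θ + Real.pi / 2) / 2) ≠ 0)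
    (h3 : Real.tan (θ / 2) ≠ 1) :
    (Real.tan ((θ + Real.pi / 2) / 2) : ℂ) * Complex.exp (Complex.I * (ψ : ℂ)) =
      (Complex.exp (Complex.I * (ψ : ℂ)) +
          (Real.tan (θ / 2) : ℂ) * Complex.exp (Complex.I * (ψ : ℂ))) /
        (1 - (starRingEnd ℂ) (Complex.exp (Complex.I * (ψ : ℂ))) *
          ((Real.tan (θ / 2) : ℂ) * Complex.exp (Complex.I * (ψ : ℂ)))) := by
  have hconj : (starRingEnd ℂ) (Complex.exp (Complex.I * (ψ : ℂ))) *
      ((Real.tan (θ / 2) : ℂ) * Complex.exp (Complex.I * (ψ : ℂ)))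
      = (Real.tan (θ / 2) : ℂ) := by
    rw [← Complex.exp_conj]
    rw [show (starRingEnd ℂ) (Complex.I * (ψ : ℂ)) = -(Complex.I * (ψ : ℂ)) by
      simp [Complex.conj_I]]
    rw [mul_comm (Real.tan (θ / 2) : ℂ), ← mul_assoc, ← Complex.exp_add]
    simp
  have hx : ∀ k : ℤ, θ / 2 ≠ (2 * k + 1) * Real.pi / 2 := by
    intro k hk
    exact h1 (Real.cos_eq_zero_iff.mpr ⟨k, by linarith [hk]⟩)
  have hy : ∀ k : ℤ, Real.pi / 4 ≠ (2 * k + 1) * Real.pi / 2 := by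
    intro k hk
    have hpi := Real.pi_pos
    rcases le_or_gt 0 (k : ℝ) with h | h
    · nlinarith
    · have : (k : ℝ) ≤ -1 := by exact_mod_cast Int.le_of_lt_add_one (by exact_mod_cast h)
      nlinarith
  have htan : Real.tan ((θ + Real.pi / 2) / 2) =
      (1 + Real.tan (θ / 2)) / (1 - Real.tan (θ / 2)) := by
    have he : (θ + Real.pi / 2) / 2 = θ / 2 + Real.pi / 4 := by ring
    rw [he, Real.tan_add (Or.inl ⟨hx, hy⟩), Real.tan_pi_div_four]
    ring_nf
  have ht1 : (1 : ℂ) - (Real.tan (θ / 2) : ℂ) ≠ 0 := by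
    intro h
    apply h3
    have : (Real.tan (θ / 2) : ℂ) = 1 := by linear_combination -h
    exact_mod_cast this
  rw [hconj, htan]
  have h3' : (1 : ℝ) - Real.tan (θ / 2) ≠ 0 := sub_ne_zero.mpr (Ne.symm h3)
  push_cast
  field_simp
end

section
/- Let ζ₋, ζ₊ ∈ ℂ with |ζ₋|·|ζ₊| ≠ 1, and set q := (ζ₊·(1 − ζ₋·conj(ζ₊)) − ζ₋·(1 − conj(ζ₋)·ζ₊)) / (1 − |ζ₋|²·|ζ₊|²). Then q + ζ₋ = ζ₊·(1 − conj(q)·ζ₋), i.e. q is a solution of the transition-function equation ζ₊ = L_q ζ₋ = (q + ζ₋)/(1 − conj(q)·ζ₋) of the loop QℂC; moreover q is the unique complex number satisfying q + conj(q)·ζ₋·ζ₊ = ζ₊ − ζ₋. -/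
open Complex

/-- with q := (ζ₊·(1 − ζ₋·conj ζ₊) − ζ₋·(1 − conj(ζ₋)·ζ₊))/(1 − |ζ₋|²|ζ₊|²),
    one has q + ζ₋ = ζ₊·(1 − conj(q)·ζ₋), i.e. q solves the transition-function
    equation ζ₊ = L_q ζ₋ of the loop QℂC; moreover q is the unique complex number
    with q + conj(q)·ζ₋·ζ₊ = ζ₊ − ζ₋. -/
theorem qs2_transition_function (ζm ζp : ℂ)
    (h : ‖ζm‖ * ‖ζp‖ ≠ 1) :
    let q : ℂ := (ζp * (1 - ζm * (starRingEnd ℂ) ζp) - ζm * (1 - (starRingEnd ℂ) ζm * ζp)) /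
      (1 - (‖ζm‖ : ℂ) ^ 2 * (‖ζp‖ : ℂ) ^ 2)
    q + ζm = ζp * (1 - (starRingEnd ℂ) q * ζm) ∧
      ∀ q' : ℂ, q' + (starRingEnd ℂ) q' * ζm * ζp = ζp - ζm ↔ q' = q := by
  intro q
  have habs : ∀ z : ℂ, ((‖z‖ : ℂ)) ^ 2 = z * (starRingEnd ℂ) z := by
    intro z
    rw [← Complex.ofReal_pow, Complex.sq_norm, Complex.mul_conj]
  have hR : (‖ζm‖ * ‖ζp‖) ^ 2 ≠ 1 := by
    intro hc
    have h0 : (0:ℝ) ≤ ‖ζm‖ * ‖ζp‖ :=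
      mul_nonneg (norm_nonneg _) (norm_nonneg _)
    have hf : (‖ζm‖ * ‖ζp‖ - 1) * (‖ζm‖ * ‖ζp‖ + 1) = 0 := by
      linear_combination hc
    rcases mul_eq_zero.mp hf with h1 | h1
    · exact h (by linarith)
    · linarith
  have hD : (1 - (‖ζm‖ : ℂ) ^ 2 * (‖ζp‖ : ℂ) ^ 2) ≠ 0 := by
    intro hc
    apply hR
    have : ((1 - (‖ζm‖ * ‖ζp‖) ^ 2 : ℝ) : ℂ) = 0 := by
      push_cast; rw [← hc]; ring
    have := Complex.ofReal_eq_zero.mp this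
    linarith [this]
  have hDm : ((‖ζm‖ : ℂ) ^ 2 * (‖ζp‖ : ℂ) ^ 2)
      = ζm * (starRingEnd ℂ) ζm * (ζp * (starRingEnd ℂ) ζp) := by
    rw [habs, habs]
  have hconjq : (starRingEnd ℂ) q =
      ((starRingEnd ℂ) ζp * (1 - (starRingEnd ℂ) ζm * ζp)
        - (starRingEnd ℂ) ζm * (1 - ζm * (starRingEnd ℂ) ζp)) /
      (1 - (‖ζm‖ : ℂ) ^ 2 * (‖ζp‖ : ℂ) ^ 2) := by
    simp only [q, map_div₀, map_sub, map_mul, map_one, Complex.conj_conj, map_pow,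
      Complex.conj_ofReal]
  have key : q + (starRingEnd ℂ) q * ζm * ζp = ζp - ζm := by
    rw [hconjq]
    show (ζp * (1 - ζm * (starRingEnd ℂ) ζp) - ζm * (1 - (starRingEnd ℂ) ζm * ζp)) /
      (1 - (‖ζm‖ : ℂ) ^ 2 * (‖ζp‖ : ℂ) ^ 2) + _ = _
    field_simp
    rw [hDm]
    ring
  constructor
  · linear_combination key
  · intro q'
    constructor
    · intro hq'
      have hd : (q' - q) + (starRingEnd ℂ) (q' - q) * ζm * ζp = 0 := by
        rw [map_sub]; linear_combination hq' - key
      have hd2 : (starRingEnd ℂ) (q' - q) + (q' - q) * (starRingEnd ℂ) ζm * (starRingEnd ℂ) ζp = 0 := by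
        have := congrArg (starRingEnd ℂ) hd
        simpa [map_add, map_mul, Complex.conj_conj] using this
      have : (q' - q) * (1 - (‖ζm‖ : ℂ) ^ 2 * (‖ζp‖ : ℂ) ^ 2) = 0 := by
        rw [hDm]
        linear_combination hd - ζm * ζp * hd2
      have := mul_eq_zero.mp this
      rcases this with h0 | h0
      · exact sub_eq_zero.mp h0
      · exact absurd h0 hD
    · rintro rfl; exact key
end

section
/- For all real numbers γ, α, β with cos α ≠ 0, cos β ≠ 0, cos(α + β) ≠ 0 and 1 − tan α · tan β ≠ 0, one has (e^{iγ}·tan α) · (e^{iγ}·tan β) = e^{iγ}·tan(α + β), where · is the QℂC product. In particular, for q₊₋ = e^{iγ}·tan(θ/2), the n-th power transition function of the principal QS² bundle over S² is qⁿ₊₋ = e^{iγ}·tan(nθ/2). -/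
open Complex

/-- along each ray e^{iγ}·ℝ the QℂC product is the tangent addition
    law: (e^{iγ}·tan α) · (e^{iγ}·tan β) = e^{iγ}·tan(α + β). This underlies the
    formula qⁿ₊₋ = e^{iγ}·tan(nθ/2) for the n-th power transition function of the
    principal QS² bundle over S². -/
theorem qc_tan_addition (γ α β : ℝ)
    (hα : Real.cos α ≠ 0) (hβ : Real.cos β ≠ 0)
    (hαβ : Real.cos (α + β) ≠ 0)
    (htan : 1 - Real.tan α * Real.tan β ≠ 0) :
    qcMul (Complex.exp (Complex.I * (γ : ℂ)) * (Real.tan α : ℂ))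
          (Complex.exp (Complex.I * (γ : ℂ)) * (Real.tan β : ℂ)) =
      Complex.exp (Complex.I * (γ : ℂ)) * (Real.tan (α + β) : ℂ) := by
  have htanadd : Real.tan (α + β) = (Real.tan α + Real.tan β) / (1 - Real.tan α * Real.tan β) :=
    Real.tan_add' ⟨Real.cos_ne_zero_iff.mp hα, Real.cos_ne_zero_iff.mp hβ⟩
  have hconj : (starRingEnd ℂ) (Complex.exp (Complex.I * (γ : ℂ)) * (Real.tan α : ℂ)) *
      (Complex.exp (Complex.I * (γ : ℂ)) * (Real.tan β : ℂ))
      = ((Real.tan α * Real.tan β : ℝ) : ℂ) := by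
    rw [map_mul, Complex.conj_ofReal, ← Complex.exp_conj, map_mul, Complex.conj_I,
      Complex.conj_ofReal, mul_mul_mul_comm, ← Complex.exp_add]
    push_cast
    norm_num
  unfold qcMul
  rw [hconj, htanadd]
  have h1 : (1 : ℂ) - ((Real.tan α * Real.tan β : ℝ) : ℂ) = ((1 - Real.tan α * Real.tan β : ℝ) : ℂ) := by
    push_cast; ring
  rw [h1]
  push_cast
  field_simp
end

section
/- For all b, η ∈ ℂ with 1 − conj(b)·η ≠ 0, one has (1 + |b|²)·(1 + |η|²) / ((1 − conj(b)·η)²·(1 + |(b + η)/(1 − conj(b)·η)|²)) = (1 − b·conj(η))/(1 − conj(b)·η). Equivalently, the pullback under the left translation L_b of the canonical 1-form θ¹ = dη/(1 + |η|²) of the loop QℂC equals l_{(b,η)}·θ¹, where l_{(b,η)} = (1 − b·conj(η))/(1 − conj(b)·η) is the left associator factor; this is the transformation law (L_b^*ω)(V) = l_{(b,a)∗} ω(V) of the canonical Ad-form under left translations for the loop QℂC. -/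
open Complex

/-- the pullback of the canonical 1-form θ¹ = dη/(1+|η|²) of the loop
    QℂC under the left translation L_b equals l_{(b,η)}·θ¹: since L_b has complex
    derivative (1+|b|²)/(1−conj(b)·η)², this reads
    (1+|b|²)(1+|η|²)/((1−conj(b)·η)²·(1+|b·η|²)) = (1−b·conj η)/(1−conj(b)·η),
    where b·η = (b+η)/(1−conj(b)·η). -/
theorem qc_canonical_form_left_transform (b η : ℂ)
    (h : 1 - (starRingEnd ℂ) b * η ≠ 0) :
    ((1 + (Complex.normSq b : ℂ)) * (1 + (Complex.normSq η : ℂ))) /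
        ((1 - (starRingEnd ℂ) b * η) ^ 2 *
          (1 + (‖(b + η) / (1 - (starRingEnd ℂ) b * η)‖ : ℂ) ^ 2)) =
      (1 - b * (starRingEnd ℂ) η) / (1 - (starRingEnd ℂ) b * η) := by
  set d := 1 - (starRingEnd ℂ) b * η with hd
  have habs : ((‖(b + η) / d‖ : ℝ) : ℂ) ^ 2
      = (Complex.normSq (b + η) : ℂ) / (Complex.normSq d : ℂ) := by
    push_cast [← Complex.sq_norm, norm_div]
    ring
  have hnd : (Complex.normSq d : ℂ) ≠ 0 := by
    simpa [Complex.normSq_eq_zero] using h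
  have h1 : (Complex.normSq d : ℂ) = d * (starRingEnd ℂ) d := (Complex.mul_conj d).symm
  have h2 : (Complex.normSq (b + η) : ℂ) = (b + η) * (starRingEnd ℂ) (b + η) :=
    (Complex.mul_conj _).symm
  have h3 : (Complex.normSq b : ℂ) = b * (starRingEnd ℂ) b := (Complex.mul_conj b).symm
  have h4 : (Complex.normSq η : ℂ) = η * (starRingEnd ℂ) η := (Complex.mul_conj η).symm
  have key : (Complex.normSq d : ℂ) + (Complex.normSq (b + η) : ℂ)
      = (1 + (Complex.normSq b : ℂ)) * (1 + (Complex.normSq η : ℂ)) := by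
    rw [h1, h2, h3, h4, hd, map_sub, map_mul, map_add, map_one, Complex.conj_conj]
    ring
  have hfac : (1 : ℂ) + (‖(b + η) / d‖ : ℂ) ^ 2
      = ((1 + (Complex.normSq b : ℂ)) * (1 + (Complex.normSq η : ℂ))) /
        (Complex.normSq d : ℂ) := by
    rw [habs, ← key]
    field_simp
  rw [hfac]
  have hne : (1 + (Complex.normSq b : ℂ)) * (1 + (Complex.normSq η : ℂ)) ≠ 0 := by
    rw [← key, h1, h2]
    intro hzero
    have : (Complex.normSq d : ℝ) + Complex.normSq (b + η) = 0 := by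
      exact_mod_cast by rw [← h1, ← h2] at hzero; exact_mod_cast hzero
    have := Complex.normSq_eq_zero.mp (by nlinarith [Complex.normSq_nonneg d, Complex.normSq_nonneg (b + η)] : Complex.normSq d = 0)
    exact h this
  have hconjd : (starRingEnd ℂ) d = 1 - b * (starRingEnd ℂ) η := by
    rw [hd, map_sub, map_mul, map_one, Complex.conj_conj]
  field_simp [h1]
  rw [mul_div_cancel_left₀ _ hne, h1, hconjd]
end
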